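/- Let G(x̄) be PSD of rank r. Robinson's CQ in dual form (the only PSD Y with ⟨G(x̄),Y⟩ = 0 and DG(x̄)*[Y] = 0 is Y = 0) holds if and only if for every m×(m−r) matrix Ē with orthonormal columns spanning Ker G(x̄), the vectors v_{ii}(x̄,Ē), i = 1,…,m−r, with (v_{ii})_ℓ = ē_iᵀ (∂G/∂x_ℓ)(x̄) ē_i, are positively linearly independent. -/

import Mathlib

open Matrix


lemma aux_trace_mul_EDEt {m d : ℕ} (A : Matrix (Fin m) (Fin m) ℝ)
    (E : Matrix (Fin m) (Fin d) ℝ) (α : Fin d → ℝ) :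
    (A * (E * Matrix.diagonal α * Eᵀ)).trace
      = ∑ i, α i * ((fun k => E k i) ⬝ᵥ A.mulVec (fun k => E k i)) := by
  rw [show A * (E * Matrix.diagonal α * Eᵀ) = (A * (E * Matrix.diagonal α)) * Eᵀ by
        simp [Matrix.mul_assoc],
      Matrix.trace_mul_comm, show Eᵀ * (A * (E * Matrix.diagonal α))
        = (Eᵀ * A * E) * Matrix.diagonal α by simp [Matrix.mul_assoc]]
  simp only [Matrix.trace, Matrix.diag, Matrix.mul_apply, Matrix.diagonal_apply,
    mul_ite, mul_zero, Finset.sum_ite_eq, Finset.sum_ite_eq', Finset.mem_univ, if_true, dotProduct,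
    Matrix.mulVec, Matrix.transpose_apply]
  refine Finset.sum_congr rfl fun i _ => ?_
  rw [mul_comm]
  congr 1
  simp only [Finset.sum_mul, Finset.mul_sum]
  rw [Finset.sum_comm]
  exact Finset.sum_congr rfl fun x _ => Finset.sum_congr rfl fun y _ => by ring

lemma aux_MMt_trace_zero {a b : ℕ} {M : Matrix (Fin a) (Fin b) ℝ}
    (h : (M * Mᵀ).trace = 0) : M = 0 := by
  ext i j
  have h' : ∑ i, ∑ j, (M i j)^2 = 0 := by
    simpa [Matrix.trace, Matrix.diag, Matrix.mul_apply, sq] using h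
  have h1 := (Finset.sum_eq_zero_iff_of_nonneg (fun i _ => Finset.sum_nonneg
    (fun j _ => sq_nonneg (M i j)))).mp h' i (Finset.mem_univ i)
  have h2 := (Finset.sum_eq_zero_iff_of_nonneg (fun j _ => sq_nonneg (M i j))).mp
    h1 j (Finset.mem_univ j)
  simpa using sq_eq_zero_iff.mp h2

open scoped MatrixOrder in
lemma aux_psd_trace_zero {m : ℕ} {P Q : Matrix (Fin m) (Fin m) ℝ}
    (hP : P.PosSemidef) (hQ : Q.PosSemidef) (h : (P * Q).trace = 0) : P * Q = 0 := by
  set S := CFC.sqrt P with hS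
  set T := CFC.sqrt Q with hT
  have hSsymm : Sᵀ = S := by
    have := (CFC.sqrt_nonneg P).posSemidef.1
    rwa [Matrix.IsHermitian, Matrix.conjTranspose_eq_transpose_of_trivial] at this
  have hTsymm : Tᵀ = T := by
    have := (CFC.sqrt_nonneg Q).posSemidef.1
    rwa [Matrix.IsHermitian, Matrix.conjTranspose_eq_transpose_of_trivial] at this
  have hPQ : P * Q = S * (S * T) * T := by
    conv_lhs => rw [← CFC.sqrt_mul_sqrt_self P hP.nonneg, ← CFC.sqrt_mul_sqrt_self Q hQ.nonneg]
    simp only [← hS, ← hT, Matrix.mul_assoc]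
  have htr : ((S * T) * (S * T)ᵀ).trace = 0 := by
    rw [Matrix.transpose_mul, hSsymm, hTsymm]
    rw [show (S * T) * (T * S) = (S * T * T) * S by simp [Matrix.mul_assoc],
      Matrix.trace_mul_comm, show S * (S * T * T) = S * (S * T) * T by simp [Matrix.mul_assoc],
      ← hPQ, h]
  have hST : S * T = 0 := by
    have := aux_MMt_trace_zero htr
    exact this
  rw [hPQ, hST, Matrix.mul_zero, Matrix.zero_mul]


lemma aux_exists_E0 {m r : ℕ} (Gbar : Matrix (Fin m) (Fin m) ℝ) (hrank : Gbar.rank = r) :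
    ∃ E0 : Matrix (Fin m) (Fin (m - r)) ℝ, E0ᵀ * E0 = 1 ∧ Gbar * E0 = 0 ∧
      ∀ x : Fin m → ℝ, Gbar *ᵥ x = 0 → (E0 * E0ᵀ) *ᵥ x = x := by
  classical
  set e := WithLp.linearEquiv 2 ℝ (Fin m → ℝ) with he
  set K := LinearMap.ker (Matrix.toEuclideanLin Gbar) with hKdef
  have hcomp : Matrix.toEuclideanLin Gbar
      = e.symm.toLinearMap ∘ₗ (Gbar.mulVecLin ∘ₗ e.toLinearMap) := by
    ext x
    rfl
  have hker_eq : K = Submodule.comap e.toLinearMap (LinearMap.ker Gbar.mulVecLin) := by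
    rw [hKdef, hcomp, LinearMap.ker_comp_of_ker_eq_bot _ (LinearMap.ker_eq_bot_of_injective
      e.symm.injective), LinearMap.ker_comp]
  have hK : Module.finrank ℝ K = m - r := by
    have h1 := LinearMap.finrank_range_add_finrank_ker Gbar.mulVecLin
    have h2 : Module.finrank ℝ (LinearMap.range Gbar.mulVecLin) = r := by
      rw [← hrank]; rfl
    have h3 : Module.finrank ℝ (Fin m → ℝ) = m := by simp
    have h4 : Module.finrank ℝ K
        = Module.finrank ℝ (LinearMap.ker Gbar.mulVecLin) := by
      rw [hker_eq, Submodule.comap_equiv_eq_map_symm]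
      exact LinearEquiv.finrank_map_eq e.symm _
    rw [h2, h3] at h1
    omega
  let B : OrthonormalBasis (Fin (m - r)) ℝ K :=
    (stdOrthonormalBasis ℝ K).reindex (finCongr (by rw [hK]))
  refine ⟨Matrix.of (fun k i => ((B i : EuclideanSpace ℝ (Fin m)) : Fin m → ℝ) k), ?_, ?_, ?_⟩
  · ext i j
    have h := orthonormal_iff_ite.mp B.orthonormal i j
    rw [Submodule.coe_inner] at h
    simp only [PiLp.inner_apply, RCLike.inner_apply, starRingEnd_apply, star_trivial] at h
    simp only [Matrix.mul_apply, Matrix.transpose_apply, Matrix.of_apply, Matrix.one_apply]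
    rw [← h]; exact Finset.sum_congr rfl fun _ _ => mul_comm _ _
  · ext k i
    have hmem : Matrix.toEuclideanLin Gbar (B i : EuclideanSpace ℝ (Fin m)) = 0 :=
      (B i).2
    rw [Matrix.toEuclideanLin_apply] at hmem
    have h1 : Gbar *ᵥ (WithLp.equiv 2 (Fin m → ℝ) (B i : EuclideanSpace ℝ (Fin m))) = 0 := by
      have h2 := congrArg (WithLp.equiv 2 (Fin m → ℝ)) hmem
      simpa using h2
    simp only [Matrix.mul_apply, Matrix.of_apply, Matrix.zero_apply]
    simpa [Matrix.mulVec, dotProduct] using congrFun h1 k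
  · intro x hx
    have hx' : e.symm x ∈ K := by
      rw [hKdef, LinearMap.mem_ker]
      apply e.injective
      rw [Matrix.toEuclideanLin_apply]
      have : (e.symm x).ofLp = x := rfl
      rw [this, hx]
      simp
    set xK : K := ⟨e.symm x, hx'⟩ with hxK
    have hrepr := B.sum_repr xK
    have hco : ∀ i, B.repr xK i = ∑ l, (e ((B i : K) : EuclideanSpace ℝ (Fin m))) l * x l := by
      intro i
      rw [B.repr_apply_apply, Submodule.coe_inner]
      simp only [PiLp.inner_apply, RCLike.inner_apply, starRingEnd_apply, star_trivial]
      exact Finset.sum_congr rfl fun _ _ => mul_comm _ _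
    have hrepr' : ((∑ i, B.repr xK i • B i : K) : EuclideanSpace ℝ (Fin m))
        = ∑ i, B.repr xK i • ((B i : K) : EuclideanSpace ℝ (Fin m)) := by
      push_cast
      rfl
    have hrepr'' : (xK : EuclideanSpace ℝ (Fin m))
        = ∑ i, B.repr xK i • ((B i : K) : EuclideanSpace ℝ (Fin m)) := by
      rw [← hrepr']
      exact congrArg _ hrepr.symm
    have hsum : ∀ k, (∑ i, B.repr xK i * (e ((B i : K) : EuclideanSpace ℝ (Fin m))) k) = x k := by
      intro k
      have h5 := congrFun (congrArg e hrepr'') k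
      rw [map_sum] at h5
      rw [Finset.sum_apply] at h5
      have h6 : (e (xK : EuclideanSpace ℝ (Fin m))) k = x k := rfl
      rw [h6] at h5
      rw [h5]
      exact Finset.sum_congr rfl fun i _ => by rw [_root_.map_smul]; rfl
    funext k
    rw [Matrix.mulVec, dotProduct]
    simp only [Matrix.mul_apply, Matrix.transpose_apply, Matrix.of_apply]
    have goal1 : ∑ l, (∑ i, (e ((B i : K) : EuclideanSpace ℝ (Fin m))) k
            * (e ((B i : K) : EuclideanSpace ℝ (Fin m))) l) * x l
        = ∑ i, B.repr xK i * (e ((B i : K) : EuclideanSpace ℝ (Fin m))) k := by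
      simp only [Finset.sum_mul]
      rw [Finset.sum_comm]
      refine Finset.sum_congr rfl fun i _ => ?_
      rw [hco i, Finset.sum_mul]
      exact Finset.sum_congr rfl fun l _ => by ring
    exact goal1.trans (hsum k)

/-- Robinson's CQ in dual form (the only PSD `Y` with `⟨G(x̄),Y⟩ = 0` and
`DG(x̄)*[Y] = 0` is `Y = 0`) holds iff for every `Ē` with orthonormal columns
spanning `Ker G(x̄)`, the vectors `v_{ii}(x̄,Ē)` are positively linearly
independent. -/
theorem robinson_iff_pos_li_all_bases (n m r : ℕ)
    (Gbar : Matrix (Fin m) (Fin m) ℝ) (hG : Gbar.PosSemidef) (hrank : Gbar.rank = r)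
    (A : Fin n → Matrix (Fin m) (Fin m) ℝ) (hA : ∀ ℓ, (A ℓ).IsSymm) :
    (∀ Y : Matrix (Fin m) (Fin m) ℝ, Y.PosSemidef → (Gbar * Y).trace = 0 →
        (∀ ℓ, (A ℓ * Y).trace = 0) → Y = 0) ↔
    (∀ E : Matrix (Fin m) (Fin (m - r)) ℝ, Eᵀ * E = 1 → Gbar * E = 0 →
        ∀ α : Fin (m - r) → ℝ, (∀ i, 0 ≤ α i) →
          (∑ i, α i • (fun ℓ : Fin n =>
            (fun k => E k i) ⬝ᵥ (A ℓ).mulVec (fun k => E k i))) = 0 →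
          ∀ i, α i = 0) := by
  constructor
  · -- forward
    intro h E hE1 hE2 α hα hsum i
    set Y := E * Matrix.diagonal α * Eᵀ with hYdef
    have hEH : Eᴴ = Eᵀ := Matrix.conjTranspose_eq_transpose_of_trivial E
    have hYpsd : Y.PosSemidef := by
      have := (Matrix.posSemidef_diagonal_iff.mpr hα).mul_mul_conjTranspose_same E
      rwa [hEH] at this
    have hGY : (Gbar * Y).trace = 0 := by
      rw [show Gbar * Y = (Gbar * E) * Matrix.diagonal α * Eᵀ by
        rw [hYdef]; simp [Matrix.mul_assoc], hE2]
      simp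
    have hAY : ∀ ℓ, (A ℓ * Y).trace = 0 := by
      intro ℓ
      rw [hYdef, aux_trace_mul_EDEt]
      have := congrFun hsum ℓ
      simpa [Finset.sum_apply] using this
    have hY0 : Y = 0 := h Y hYpsd hGY hAY
    have hD : Matrix.diagonal α = 0 := by
      have : Eᵀ * Y * E = Matrix.diagonal α := by
        rw [hYdef, show Eᵀ * (E * Matrix.diagonal α * Eᵀ) * E
          = (Eᵀ * E) * Matrix.diagonal α * (Eᵀ * E) by simp [Matrix.mul_assoc], hE1]
        simp
      rw [hY0] at this
      simp at this
      exact this.symm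
    have := congrArg (fun M => M i i) hD
    simpa using this
  · -- backward
    intro h Y hY hGY hAY
    obtain ⟨E0, hE01, hE02, hproj⟩ := aux_exists_E0 Gbar hrank
    -- G * Y = 0, so columns of Y are in the kernel
    have hGY0 : Gbar * Y = 0 := aux_psd_trace_zero hG hY hGY
    have hcol : ∀ j, Gbar *ᵥ (fun k => Y k j) = 0 := by
      intro j
      funext i
      have := congrFun (congrFun hGY0 i) j
      simpa [Matrix.mul_apply, Matrix.mulVec, dotProduct] using this
    have hPY : (E0 * E0ᵀ) * Y = Y := by
      ext i j
      have := congrFun (hproj (fun k => Y k j) (hcol j)) i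
      simpa [Matrix.mul_apply, Matrix.mulVec, dotProduct] using this
    have hYsymm : Yᵀ = Y := by
      have := hY.1
      rwa [Matrix.IsHermitian, Matrix.conjTranspose_eq_transpose_of_trivial] at this
    have hP_symm : (E0 * E0ᵀ)ᵀ = E0 * E0ᵀ := by
      rw [Matrix.transpose_mul, Matrix.transpose_transpose]
    have hYP : Y * (E0 * E0ᵀ) = Y := by
      have := congrArg Matrix.transpose hPY
      rwa [Matrix.transpose_mul, hYsymm, hP_symm] at this
    have hYdecomp : Y = E0 * (E0ᵀ * Y * E0) * E0ᵀ := by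
      calc Y = (E0 * E0ᵀ) * Y * (E0 * E0ᵀ) := by rw [hPY, hYP]
        _ = E0 * (E0ᵀ * Y * E0) * E0ᵀ := by simp [Matrix.mul_assoc]
    set M := E0ᵀ * Y * E0 with hMdef
    have hE0H : E0ᴴ = E0ᵀ := Matrix.conjTranspose_eq_transpose_of_trivial E0
    have hMpsd : M.PosSemidef := by
      have := hY.conjTranspose_mul_mul_same E0
      rwa [hE0H] at this
    have hM1 := hMpsd.1
    set U : Matrix (Fin (m - r)) (Fin (m - r)) ℝ :=
      ((hM1.eigenvectorUnitary : ↥(Matrix.unitaryGroup (Fin (m - r)) ℝ)) :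
        Matrix (Fin (m - r)) (Fin (m - r)) ℝ) with hUdef
    set μ : Fin (m - r) → ℝ := hM1.eigenvalues with hμdef
    have hstarU : star U = Uᵀ := by
      rw [Matrix.star_eq_conjTranspose, Matrix.conjTranspose_eq_transpose_of_trivial]
    have hUU : Uᵀ * U = 1 := by
      rw [← hstarU]
      exact (Matrix.mem_unitaryGroup_iff').mp hM1.eigenvectorUnitary.2
    have hspec : M = U * Matrix.diagonal μ * Uᵀ := by
      have h0 := hM1.spectral_theorem
      rw [← hstarU]
      rwa [show Matrix.diagonal (RCLike.ofReal ∘ μ) = Matrix.diagonal μ by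
        rw [RCLike.ofReal_real_eq_id]; rfl] at h0
    -- define E and α
    set E := E0 * U with hEdef
    have hE1 : Eᵀ * E = 1 := by
      rw [hEdef, Matrix.transpose_mul, show Uᵀ * E0ᵀ * (E0 * U) = Uᵀ * (E0ᵀ * E0) * U by
        simp [Matrix.mul_assoc], hE01]
      rw [Matrix.mul_one, hUU]
    have hE2 : Gbar * E = 0 := by
      rw [hEdef, ← Matrix.mul_assoc, hE02, Matrix.zero_mul]
    have hYE : Y = E * Matrix.diagonal μ * Eᵀ := by
      rw [hEdef, Matrix.transpose_mul, hYdecomp, hspec]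
      simp [Matrix.mul_assoc]
    have hμ0 : ∀ i, μ i = 0 := by
      refine h E hE1 hE2 μ (fun i => hMpsd.eigenvalues_nonneg i) ?_
      funext ℓ
      rw [Finset.sum_apply]
      have := hAY ℓ
      rw [hYE, aux_trace_mul_EDEt] at this
      simpa using this
    rw [hYE, show Matrix.diagonal μ = 0 by ext a b; by_cases hab : a = b <;>
      simp [Matrix.diagonal_apply, hab, hμ0]]
    simp
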